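/- Let C ⊆ F₂^n be a binary linear code with minimum distance d ≥ 1, and let C^⊥ = {y ∈ F₂^n : ⟨y, c⟩ = 0 for all c ∈ C} be its dual code. Then the uniform distribution on C^⊥, viewed as a random variable taking values in {0,1}^n, is (d−1)-wise independent. -/

import Mathlib

open Finset

/-- The standard dot-product bilinear form over `F₂`. -/
private noncomputable def dotF (ι : Type*) [Fintype ι] :
    LinearMap.BilinForm (ZMod 2) (ι → ZMod 2) :=
  LinearMap.mk₂ (ZMod 2) (fun x y => ∑ i, x i * y i)
    (fun x x' y => by simp [add_mul, Finset.sum_add_distrib])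
    (fun c x y => by simp [Finset.mul_sum, mul_assoc])
    (fun x y y' => by simp [mul_add, Finset.sum_add_distrib])
    (fun c x y => by simp [Finset.mul_sum, mul_assoc, mul_left_comm])

private lemma dotF_apply {ι : Type*} [Fintype ι] (x y : ι → ZMod 2) :
    dotF ι x y = ∑ i, x i * y i := rfl

private lemma dotF_symm {ι : Type*} [Fintype ι] (x y : ι → ZMod 2) :
    dotF ι x y = dotF ι y x := by
  simp [dotF_apply, mul_comm]

private lemma dotF_refl {ι : Type*} [Fintype ι] : (dotF ι).IsRefl := by
  intro x y h
  show dotF ι y x = 0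
  rw [← dotF_symm]
  exact h

private lemma dotF_nondeg {ι : Type*} [Fintype ι] [DecidableEq ι] : (dotF ι).Nondegenerate := by
  refine ⟨fun x hx => ?_, fun x hx => ?_⟩ <;>
  · funext i
    have := hx (Pi.single i 1)
    simpa [dotF_apply, Pi.single_apply, mul_ite, ite_mul, Finset.sum_ite_eq', Finset.sum_ite_eq] using this

open Classical in
/-- The restriction of the dual code to any set `S` of fewer than `d` coordinates is
surjective. -/
private lemma dual_restrict_surj (n d : ℕ) (C : Submodule (ZMod 2) (Fin n → ZMod 2))
    (hmin : ∀ c ∈ C, c ≠ 0 → d ≤ hammingNorm c)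
    (S : Finset (Fin n)) (hS : S.card < d) :
    ∀ a : {i // i ∈ S} → ZMod 2,
      ∃ y ∈ (dotF (Fin n)).orthogonal C, ∀ i : {i // i ∈ S}, y i.1 = a i := by
  have key : Submodule.map (LinearMap.funLeft (ZMod 2) (ZMod 2) (fun i : {i // i ∈ S} => i.1))
      ((dotF (Fin n)).orthogonal C) = ⊤ := by
    by_contra hW
    set r := LinearMap.funLeft (ZMod 2) (ZMod 2) (fun i : {i // i ∈ S} => i.1)
    set W := Submodule.map r ((dotF (Fin n)).orthogonal C) with hWdef
    -- get a nonzero vector orthogonal to W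
    have horth : (dotF {i // i ∈ S}).orthogonal W ≠ ⊥ := by
      intro hbot
      apply hW
      have := LinearMap.BilinForm.orthogonal_orthogonal (dotF_nondeg) (dotF_refl) W
      rw [hbot] at this
      rw [← this, LinearMap.BilinForm.orthogonal_bot]
    obtain ⟨c', hc'W, hc'ne⟩ := Submodule.exists_mem_ne_zero_of_ne_bot horth
    -- extend c' by zero to a vector on Fin n
    set c : Fin n → ZMod 2 := fun j => if h : j ∈ S then c' ⟨j, h⟩ else 0 with hc
    have hcne : c ≠ 0 := by
      obtain ⟨i, hi⟩ := Function.ne_iff.mp hc'ne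
      intro h
      apply hi
      have : c i.1 = 0 := by rw [h]; rfl
      simpa [hc, i.2] using this
    have hnorm : hammingNorm c ≤ S.card := by
      apply Finset.card_le_card
      intro j hj
      simp only [hammingNorm, Finset.mem_filter, Finset.mem_univ, true_and] at hj
      by_contra hjS
      exact hj (by simp [hc, hjS])
    -- c is orthogonal to the dual code, hence lies in C
    have hcC : c ∈ C := by
      rw [← LinearMap.BilinForm.orthogonal_orthogonal (dotF_nondeg) (dotF_refl) C]
      intro y hy
      have hry : r y ∈ W := Submodule.mem_map_of_mem hy
      have h0 : dotF {i // i ∈ S} (r y) c' = 0 := hc'W (r y) hry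
      have : dotF (Fin n) y c = ∑ i : {i // i ∈ S}, y i.1 * c' i := by
        rw [dotF_apply]
        rw [← Finset.sum_subset (Finset.subset_univ S)
          (by intro j _ hjS; simp [hc, hjS])]
        rw [← Finset.sum_attach S (fun j => y j * c j)]
        refine Finset.sum_congr rfl fun i _ => ?_
        simp [hc, i.2]
      have hy0 : dotF (Fin n) y c = 0 := by
        rw [this, ← h0, dotF_apply]
        rfl
      exact hy0
    have := hmin c hcC hcne
    omega
  intro a
  have ha : a ∈ Submodule.map (LinearMap.funLeft (ZMod 2) (ZMod 2)
      (fun i : {i // i ∈ S} => i.1)) ((dotF (Fin n)).orthogonal C) := by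
    rw [key]; trivial
  obtain ⟨y, hy, hya⟩ := ha
  exact ⟨y, hy, fun i => congrFun hya i⟩

open Classical in
/-- If `C ⊆ F₂^n` is a linear code of minimum distance `d ≥ 1` (every nonzero codeword
has Hamming weight at least `d`), then the uniform distribution on the dual code
`C^⊥ = {y : ⟨y, c⟩ = 0 for all c ∈ C}` is `(d−1)`-wise independent. -/
theorem dual_code_kwise_indep (n d : ℕ) (hd : 1 ≤ d)
    (C : Submodule (ZMod 2) (Fin n → ZMod 2))
    (hmin : ∀ c ∈ C, c ≠ 0 → d ≤ hammingNorm c) :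
    let Dual : Finset (Fin n → ZMod 2) :=
      Finset.univ.filter fun y => ∀ c ∈ C, ∑ i, y i * c i = 0
    let p : (Fin n → ZMod 2) → ℝ := fun x => if x ∈ Dual then 1 / Dual.card else 0
    ∀ S : Finset (Fin n), S.card ≤ d - 1 → ∀ a : Fin n → ZMod 2,
      (∑ x ∈ Finset.univ.filter fun x => ∀ i ∈ S, x i = a i, p x) =
        (1 / 2 : ℝ) ^ S.card := by
  intro Dual p S hS a
  have hSd : S.card < d := by omega
  have hsurj := dual_restrict_surj n d C hmin S hSd
  -- membership translation
  have hmem : ∀ x, x ∈ Dual ↔ x ∈ (dotF (Fin n)).orthogonal C := by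
    intro x
    simp only [Dual, Finset.mem_filter, Finset.mem_univ, true_and,
      LinearMap.BilinForm.mem_orthogonal_iff, LinearMap.BilinForm.IsOrtho, dotF_apply]
    constructor
    · intro h c hc; rw [← h c hc]; exact Finset.sum_congr rfl fun i _ => mul_comm _ _
    · intro h c hc; rw [← h c hc]; exact Finset.sum_congr rfl fun i _ => mul_comm _ _
  set f : (Fin n → ZMod 2) → ({i // i ∈ S} → ZMod 2) := fun x i => x i.1 with hf
  -- all fibers of f over Dual have the same cardinality
  have hfib : ∀ b₁ b₂ : {i // i ∈ S} → ZMod 2,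
      (Dual.filter fun x => f x = b₁).card = (Dual.filter fun x => f x = b₂).card := by
    intro b₁ b₂
    obtain ⟨w, hwD, hw⟩ := hsurj (b₁ + b₂)
    have hww : ∀ u v : ZMod 2, u + (u + v) = v := by decide
    have hvv : ∀ u v : ZMod 2, v + (u + v) = u := by decide
    have hxw : ∀ u v : ZMod 2, u + v + v = u := by decide
    refine Finset.card_nbij' (· + w) (· + w) ?_ ?_ ?_ ?_
    · intro x hx
      rw [Finset.mem_coe, Finset.mem_filter] at hx ⊢
      refine ⟨(hmem _).2 (Submodule.add_mem _ ((hmem _).1 hx.1) hwD), ?_⟩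
      funext i
      have : f x i = b₁ i := congrFun hx.2 i
      simp only [hf, Pi.add_apply] at this ⊢
      rw [this, hw i, Pi.add_apply]
      exact hww _ _
    · intro x hx
      rw [Finset.mem_coe, Finset.mem_filter] at hx ⊢
      refine ⟨(hmem _).2 (Submodule.add_mem _ ((hmem _).1 hx.1) hwD), ?_⟩
      funext i
      have : f x i = b₂ i := congrFun hx.2 i
      simp only [hf, Pi.add_apply] at this ⊢
      rw [this, hw i, Pi.add_apply]
      exact hvv _ _
    · intro x _; funext j; simp only [Pi.add_apply]; exact hxw _ _
    · intro x _; funext j; simp only [Pi.add_apply]; exact hxw _ _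
  -- partition Dual into fibers
  have hcardfun : Fintype.card ({i // i ∈ S} → ZMod 2) = 2 ^ S.card := by
    simp [Fintype.card_fun, Fintype.card_coe]
  have hpart : Dual.card = 2 ^ S.card * (Dual.filter fun x => f x = f a).card := by
    rw [Finset.card_eq_sum_card_fiberwise
      (f := f) (t := Finset.univ) (fun x _ => Finset.mem_univ (f x))]
    rw [Finset.sum_congr rfl (fun b _ => hfib b (f a))]
    rw [Finset.sum_const, Finset.card_univ, hcardfun, smul_eq_mul]
  -- the fiber is nonempty
  have hfibpos : 0 < (Dual.filter fun x => f x = f a).card := by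
    obtain ⟨w, hwD, hw⟩ := hsurj (f a)
    refine Finset.card_pos.2 ⟨w, ?_⟩
    rw [Finset.mem_filter]
    exact ⟨(hmem _).2 hwD, funext fun i => hw i⟩
  -- rewrite the sum
  have hTe : ((Finset.univ.filter fun x => ∀ i ∈ S, x i = a i) ∩ Dual)
      = Dual.filter fun x => f x = f a := by
    ext x
    simp only [Finset.mem_inter, Finset.mem_filter, Finset.mem_univ, true_and, hf,
      funext_iff, Subtype.forall]
    tauto
  have hsum : (∑ x ∈ Finset.univ.filter fun x => ∀ i ∈ S, x i = a i, p x)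
      = ((Dual.filter fun x => f x = f a).card : ℝ) * (1 / Dual.card) := by
    have h1 : (∑ x ∈ Finset.univ.filter fun x => ∀ i ∈ S, x i = a i, p x)
        = ∑ x ∈ Finset.univ.filter fun x => ∀ i ∈ S, x i = a i,
            (if x ∈ Dual then (1 / (Dual.card : ℝ)) else 0) := rfl
    rw [h1, Finset.sum_ite_mem, hTe, Finset.sum_const, nsmul_eq_mul]
  rw [hsum, hpart]
  have hF : ((Dual.filter fun x => f x = f a).card : ℝ) ≠ 0 := by
    exact Nat.cast_ne_zero.mpr hfibpos.ne'
  push_cast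
  rw [div_pow, one_pow]
  field_simp
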